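/- Let n ≥ 3 and let a, b, c, d, e, f be positive integers forming a Gelfand-Tsetlin triangle of size 3 with bottom entry c, middle row (b, e), and top row (a, d, f), i.e. a ≤ b ≤ d ≤ e ≤ f and b ≤ c ≤ e. Then this triangle arises as the bottom three rows of some Gog triangle of size n (i.e. it is an (n,3,3,3) Gog pentagon) if and only if a < d < f, b < e, and f ≤ n. -/
import Mathlib


/-- A Gelfand-Tsetlin triangle of size `n`: a triangular array of positive integers
`X i j` for `n ≥ i ≥ j ≥ 1` with `X (i+1) j ≤ X i j ≤ X (i+1) (j+1)`. -/
def IsGT (n : ℕ) (X : ℕ → ℕ → ℤ) : Prop :=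
  (∀ i j, 1 ≤ j → j ≤ i → i ≤ n → 1 ≤ X i j) ∧
  (∀ i j, 1 ≤ j → j ≤ i → i + 1 ≤ n → X (i+1) j ≤ X i j ∧ X i j ≤ X (i+1) (j+1))

/-- A Gog triangle of size `n`: a Gelfand-Tsetlin triangle with strictly increasing
rows and top row `X n j = j`. -/
def IsGog (n : ℕ) (X : ℕ → ℕ → ℤ) : Prop :=
  IsGT n X ∧
  (∀ i j, 1 ≤ j → j + 1 ≤ i → i ≤ n → X i j < X i (j+1)) ∧
  (∀ j, 1 ≤ j → j ≤ n → X n j = (j : ℤ))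

/-- A Magog triangle of size `n`. -/
def IsMagog (n : ℕ) (X : ℕ → ℕ → ℤ) : Prop :=
  IsGT n X ∧ ∀ j, 1 ≤ j → j ≤ n → X j j ≤ (j : ℤ)

/-- A GOGAm triangle of size `n`, characterized by the family of inequalities. -/
def IsGogam (n : ℕ) (X : ℕ → ℕ → ℤ) : Prop :=
  IsGT n X ∧ X n n ≤ (n : ℤ) ∧
  ∀ k : ℕ, 1 ≤ k → k ≤ n - 1 →
    ∀ j : ℕ → ℕ, j 0 = n → (∀ i, i < n - k → j (i+1) < j i) → 1 ≤ j (n - k) →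
      (∑ i ∈ Finset.range (n - k),
        (X (j i + i) (j i) - X (j (i+1) + i) (j (i+1))))
        + X (j (n-k) + (n-k)) (j (n-k)) ≤ (k : ℤ)

/-- The number of inversions of `X` (pairs `(i,j)` with `X i j = X (i+1) j`). -/
noncomputable def invCount (n : ℕ) (X : ℕ → ℕ → ℤ) : ℕ :=
  Set.ncard {p : ℕ × ℕ | 1 ≤ p.2 ∧ p.2 ≤ p.1 ∧ p.1 + 1 ≤ n ∧ X p.1 p.2 = X (p.1+1) p.2}

/-- The number of coinversions of `X` (pairs `(i,j)` with `X i j = X (i+1) (j+1)`). -/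
noncomputable def coinvCount (n : ℕ) (X : ℕ → ℕ → ℤ) : ℕ :=
  Set.ncard {p : ℕ × ℕ | 1 ≤ p.2 ∧ p.2 ≤ p.1 ∧ p.1 + 1 ≤ n ∧ X p.1 p.2 = X (p.1+1) (p.2+1)}

/-- Characterization of `(n,3,3,3)` Gog pentagons: a Gelfand-Tsetlin triangle of size 3
(bottom `c`, middle row `(b,e)`, top row `(a,d,f)`) is the bottom three rows of a Gog
triangle of size `n` iff `a < d`, `d < f`, `b < e` and `f ≤ n`. -/
theorem stmt18 (n : ℕ) (hn : 3 ≤ n) (a b c d e f : ℤ)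
    (ha : 1 ≤ a) (hab : a ≤ b) (hbd : b ≤ d) (hde : d ≤ e) (hef : e ≤ f)
    (hbc : b ≤ c) (hce : c ≤ e) :
    (∃ X : ℕ → ℕ → ℤ, IsGog n X ∧ X 1 1 = c ∧ X 2 1 = b ∧ X 2 2 = e ∧
      X 3 1 = a ∧ X 3 2 = d ∧ X 3 3 = f) ↔
    (a < d ∧ d < f ∧ b < e ∧ f ≤ (n : ℤ)) := by
  constructor
  · rintro ⟨X, ⟨⟨hpos, hgt⟩, hstrict, htop⟩, h11, h21, h22, h31, h32, h33⟩
    refine ⟨?_, ?_, ?_, ?_⟩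
    · have := hstrict 3 1 (by norm_num) (by norm_num) hn
      rw [h31] at this; rw [show (1+1 : ℕ) = 2 from rfl, h32] at this; exact this
    · have := hstrict 3 2 (by norm_num) (by norm_num) hn
      rw [h32] at this; rw [show (2+1 : ℕ) = 3 from rfl, h33] at this; exact this
    · have := hstrict 2 1 (by norm_num) (by norm_num) (by omega)
      rw [h21] at this; rw [show (1+1 : ℕ) = 2 from rfl, h22] at this; exact this
    · have key : ∀ m : ℕ, 3 + m ≤ n → X 3 3 ≤ X (3+m) (3+m) := by
        intro m
        induction m with
        | zero => intro _; simp
        | succ k ih =>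
          intro h
          have h1 := ih (by omega)
          have h2 := (hgt (3+k) (3+k) (by omega) le_rfl (by omega)).2
          exact le_trans h1 h2
      have hk := key (n-3) (by omega)
      rw [show 3 + (n-3) = n from by omega] at hk
      have ht := htop n (by omega) le_rfl
      rw [h33, ht] at hk
      exact hk
  · rintro ⟨had, hdf, hbe, hfn⟩
    set w : ℕ → ℤ := fun j => if j = 1 then a else if j = 2 then d else f + ((j:ℤ) - 3) with hw
    have hwmono : ∀ j : ℕ, 1 ≤ j → w j + 1 ≤ w (j+1) := by
      intro j hj
      rcases Nat.lt_or_ge j 3 with h | h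
      · interval_cases j <;> simp [hw] <;> omega
      · have h1 : j ≠ 1 := by omega
        have h2 : j ≠ 2 := by omega
        have h3 : j + 1 ≠ 1 := by omega
        have h4 : j + 1 ≠ 2 := by omega
        simp only [hw, if_neg h1, if_neg h2, if_neg h3, if_neg h4]
        push_cast; omega
    have hwub : ∀ j : ℕ, 1 ≤ j → w j ≤ (j:ℤ) + (n:ℤ) - 3 := by
      intro j hj
      rcases Nat.lt_or_ge j 3 with h | h
      · interval_cases j <;> simp [hw] <;> omega
      · have h1 : j ≠ 1 := by omega
        have h2 : j ≠ 2 := by omega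
        simp only [hw, if_neg h1, if_neg h2]
        omega
    have hwlb : ∀ j : ℕ, 1 ≤ j → (j:ℤ) ≤ w j := by
      intro j hj
      rcases Nat.lt_or_ge j 3 with h | h
      · interval_cases j <;> simp [hw] <;> omega
      · have h1 : j ≠ 1 := by omega
        have h2 : j ≠ 2 := by omega
        simp only [hw, if_neg h1, if_neg h2]
        omega
    refine ⟨fun i j => if i ≤ 2 then (if i = 1 then c else if j = 1 then b else e)
      else max (j:ℤ) (w j - ((i:ℤ) - 3)), ⟨⟨?_, ?_⟩, ?_, ?_⟩, ?_, ?_, ?_, ?_, ?_, ?_⟩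
    · -- positivity
      intro i j hj hji hin
      by_cases hi2 : i ≤ 2
      · simp only [if_pos hi2]
        split_ifs <;> omega
      · simp only [if_neg hi2]
        have : (1:ℤ) ≤ (j:ℤ) := by exact_mod_cast hj
        exact le_trans this (le_max_left _ _)
    · -- GT inequalities
      intro i j hj hji hin
      rcases Nat.lt_or_ge i 3 with h | h
      · have : i = 1 ∨ i = 2 := by omega
        rcases this with rfl | rfl
        · have : j = 1 := by omega
          subst this
          norm_num
          exact ⟨hbc, hce⟩
        · have hj12 : j = 1 ∨ j = 2 := by omega
          rcases hj12 with rfl | rfl <;>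
            simp only [show ¬(2+1 ≤ 2) from by omega, if_neg, show (2:ℕ) ≤ 2 from le_rfl,
              if_pos, if_true] <;> norm_num [hw] <;> constructor <;> omega
      · have hi2 : ¬ i ≤ 2 := by omega
        have hi12 : ¬ i + 1 ≤ 2 := by omega
        simp only [if_neg hi2, if_neg hi12]
        have hm := hwmono j hj
        push_cast
        constructor <;> omega
    · -- strict rows
      intro i j hj hji hin
      rcases Nat.lt_or_ge i 3 with h | h
      · have : i = 2 := by omega
        subst this
        have : j = 1 := by omega
        subst this
        norm_num
        exact hbe
      · have hi2 : ¬ i ≤ 2 := by omega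
        simp only [if_neg hi2]
        have hm := hwmono j hj
        push_cast
        omega
    · -- top row
      intro j hj hjn
      have hn2 : ¬ n ≤ 2 := by omega
      simp only [if_neg hn2]
      have hu := hwub j hj
      omega
    · norm_num
    · norm_num
    · norm_num
    · have := hwlb 1 le_rfl
      norm_num [hw] at this ⊢
      omega
    · have := hwlb 2 (by norm_num)
      norm_num [hw] at this ⊢
      omega
    · norm_num [hw]
      omega
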